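/- Under assumptions A.1 and A.2, for every bounded measurable b : S → ℝ and every 0 < υ < 1/2 there exists a nonnegative, almost surely finite random variable U_{υ,b}, independent of M and ε, such that almost surely, for all M ≥ 1, | (bg^ε, q^M) − (bg, q) | ≤ ‖b‖_∞ ε + U_{υ,b} / M^{1/2 − υ}. -/

import Mathlib

open MeasureTheory ProbabilityTheory Finset

open Real
open scoped ENNReal NNReal

/-- MGF bound for a bounded centered random variable. -/
lemma aux_mgf_bound {Ω : Type*} [MeasurableSpace Ω] (μ : Measure Ω) [IsProbabilityMeasure μ]
    {Y : Ω → ℝ} (hY : Measurable Y) {c : ℝ} (hc : 0 < c)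
    (hbd : ∀ᵐ ω ∂μ, |Y ω| ≤ c) (hmean : ∫ ω, Y ω ∂μ = 0)
    {t : ℝ} (ht : |t| * c ≤ 1) :
    mgf Y μ t ≤ Real.exp (t ^ 2 * c ^ 2) := by
  have hYint : Integrable Y μ := by
    refine Integrable.mono' (integrable_const c) hY.aestronglyMeasurable ?_
    filter_upwards [hbd] with ω hω using by rwa [Real.norm_eq_abs]
  have hpt : ∀ᵐ ω ∂μ, Real.exp (t * Y ω) ≤ 1 + t * Y ω + t ^ 2 * c ^ 2 := by
    filter_upwards [hbd] with ω hω
    have hx : |t * Y ω| ≤ 1 := by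
      rw [abs_mul]
      calc |t| * |Y ω| ≤ |t| * c := by gcongr
        _ ≤ 1 := ht
    have h2 := Real.exp_bound hx (n := 2) (by norm_num)
    have hsum : ∑ i ∈ Finset.range 2, (t * Y ω) ^ i / (i.factorial : ℝ) = 1 + t * Y ω := by
      simp [Finset.sum_range_succ]
    rw [hsum] at h2
    have h3 : Real.exp (t * Y ω) ≤ 1 + t * Y ω + |t * Y ω| ^ 2 * ((3:ℝ) / (2 * 2)) := by
      have h2' := (abs_le.mp h2).2
      have : ((Nat.succ 2 : ℕ) : ℝ) / ((Nat.factorial 2 : ℕ) * (2:ℕ)) = (3:ℝ) / (2 * 2) := by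
        norm_num [Nat.factorial]
      rw [this] at h2'
      linarith
    have h4 : |t * Y ω| ^ 2 * ((3:ℝ) / (2 * 2)) ≤ t ^ 2 * c ^ 2 := by
      rw [sq_abs, mul_pow]
      nlinarith [sq_nonneg t, sq_nonneg (Y ω), abs_nonneg (Y ω), sq_abs (Y ω),
        mul_self_le_mul_self (abs_nonneg (Y ω)) hω, sq_nonneg (t * Y ω)]
    linarith
  have hint_exp : Integrable (fun ω => Real.exp (t * Y ω)) μ := by
    refine Integrable.mono' (integrable_const (Real.exp 1)) ((hY.const_mul t).exp).aestronglyMeasurable ?_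
    filter_upwards [hbd] with ω hω
    rw [Real.norm_eq_abs, abs_of_pos (Real.exp_pos _)]
    refine Real.exp_le_exp.mpr ?_
    calc t * Y ω ≤ |t * Y ω| := le_abs_self _
      _ ≤ 1 := by
        rw [abs_mul]
        calc |t| * |Y ω| ≤ |t| * c := by gcongr
          _ ≤ 1 := ht
  have hrhs : Integrable (fun ω => 1 + t * Y ω + t ^ 2 * c ^ 2) μ := by
    exact ((integrable_const 1).add (hYint.const_mul t)).add (integrable_const _)
  calc mgf Y μ t = ∫ ω, Real.exp (t * Y ω) ∂μ := rfl
    _ ≤ ∫ ω, (1 + t * Y ω + t ^ 2 * c ^ 2) ∂μ := integral_mono_ae hint_exp hrhs hpt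
    _ = 1 + t ^ 2 * c ^ 2 := by
      have h1 : Integrable (fun ω => 1 + t * Y ω) μ := (integrable_const 1).add (hYint.const_mul t)
      rw [show (fun ω => 1 + t * Y ω + t ^ 2 * c ^ 2) =
          (fun ω => (1 + t * Y ω) + (fun _ => t ^ 2 * c ^ 2) ω) from rfl,
        integral_add h1 (integrable_const _),
        integral_add (integrable_const 1) (hYint.const_mul t), integral_const_mul, hmean]
      simp
    _ ≤ Real.exp (t ^ 2 * c ^ 2) := by linarith [Real.add_one_le_exp (t ^ 2 * c ^ 2)]


lemma aux_exp_int {Ω : Type*} [MeasurableSpace Ω] (μ : Measure Ω) [IsProbabilityMeasure μ]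
    {Y : Ω → ℝ} (hY : Measurable Y) {c : ℝ} (hbd : ∀ᵐ ω ∂μ, |Y ω| ≤ c) (t : ℝ) :
    Integrable (fun ω => Real.exp (t * Y ω)) μ := by
  refine Integrable.mono' (integrable_const (Real.exp (|t| * c)))
    ((hY.const_mul t).exp).aestronglyMeasurable ?_
  filter_upwards [hbd] with ω hω
  rw [Real.norm_eq_abs, abs_of_pos (Real.exp_pos _)]
  refine Real.exp_le_exp.mpr ?_
  calc t * Y ω ≤ |t * Y ω| := le_abs_self _
    _ = |t| * |Y ω| := abs_mul _ _
    _ ≤ |t| * c := by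
      refine mul_le_mul_of_nonneg_left hω (abs_nonneg _)

lemma aux_tail {Ω : Type*} [MeasurableSpace Ω] (P : Measure Ω) [IsProbabilityMeasure P]
    {Y : ℕ → Ω → ℝ} (hYmeas : ∀ i, Measurable (Y i))
    (hYindep : iIndepFun Y P)
    {c : ℝ} (hc : 1 ≤ c) (hbd : ∀ i, ∀ᵐ ω ∂P, |Y i ω| ≤ c)
    (hmean : ∀ i, ∫ ω, Y i ω ∂P = 0)
    {υ : ℝ} (hυ0 : 0 < υ) (hυ : υ < 1 / 2)
    (M : ℕ) (hM : 1 ≤ M) :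
    P {ω | (M : ℝ) ^ ((1:ℝ)/2 + υ) ≤ |∑ i ∈ Finset.range M, Y i ω|} ≤
      ENNReal.ofReal (2 * Real.exp (-(M : ℝ) ^ (2*υ) / (4 * c ^ 2))) := by
  have hc0 : (0:ℝ) < c := lt_of_lt_of_le one_pos hc
  set m : ℝ := (M : ℝ) with hmdef
  have hm : (1:ℝ) ≤ m := by rw [hmdef]; exact_mod_cast hM
  have hm0 : (0:ℝ) < m := lt_of_lt_of_le one_pos hm
  set t : ℝ := m ^ (υ - 1/2) / (2 * c ^ 2) with htdef
  have hrle1 : m ^ (υ - 1/2) ≤ 1 :=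
    Real.rpow_le_one_of_one_le_of_nonpos hm (by linarith)
  have hr0 : 0 < m ^ (υ - 1/2) := Real.rpow_pos_of_pos hm0 _
  have ht0 : 0 < t := div_pos hr0 (by positivity)
  have htc : |t| * c ≤ 1 := by
    rw [abs_of_pos ht0, htdef, div_mul_eq_mul_div, div_le_one (by positivity)]
    nlinarith
  -- mgf bound for each variable at ±t
  have hmgf : ∀ (s : ℝ), |s| * c ≤ 1 → ∀ i, mgf (Y i) P s ≤ Real.exp (s ^ 2 * c ^ 2) :=
    fun s hs i => aux_mgf_bound P (hYmeas i) hc0 (hbd i) (hmean i) hs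
  have hmgf_sum : ∀ (s : ℝ), |s| * c ≤ 1 →
      mgf (∑ i ∈ Finset.range M, Y i) P s ≤ Real.exp (m * (s ^ 2 * c ^ 2)) := by
    intro s hs
    rw [hYindep.mgf_sum hYmeas]
    calc ∏ i ∈ Finset.range M, mgf (Y i) P s ≤
        ∏ _i ∈ Finset.range M, Real.exp (s ^ 2 * c ^ 2) :=
          Finset.prod_le_prod (fun i _ => mgf_nonneg) (fun i _ => hmgf s hs i)
      _ = Real.exp (s ^ 2 * c ^ 2) ^ M := by rw [Finset.prod_const, Finset.card_range]
      _ = Real.exp (m * (s ^ 2 * c ^ 2)) := by rw [← Real.exp_nat_mul]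
  -- exponent arithmetic
  have e1 : (m ^ (υ - 1/2)) ^ 2 = m ^ (2*υ - 1) := by
    rw [sq, ← Real.rpow_add hm0]; ring_nf
  have e2 : m * m ^ (2*υ - 1) = m ^ (2*υ) := by
    nth_rewrite 1 [← Real.rpow_one m]; rw [← Real.rpow_add hm0]; ring_nf
  have e3 : m ^ (υ - 1/2) * m ^ ((1:ℝ)/2 + υ) = m ^ (2*υ) := by
    rw [← Real.rpow_add hm0]; ring_nf
  have key : -t * m ^ ((1:ℝ)/2 + υ) + m * (t ^ 2 * c ^ 2) = -m ^ (2*υ) / (4 * c ^ 2) := by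
    have hcne : c ≠ 0 := ne_of_gt hc0
    rw [htdef]
    field_simp
    have e1' : (m ^ ((υ*2 - 1)/2)) ^ 2 = m ^ (2*υ - 1) := by
      rw [show (υ*2-1)/2 = υ - 1/2 by ring]; exact e1
    have e3' : m ^ ((υ*2 - 1)/2) * m ^ ((1 + υ*2)/2) = m ^ (2*υ) := by
      rw [show (υ*2-1)/2 = υ - 1/2 by ring, show (1+υ*2)/2 = 1/2 + υ by ring]; exact e3
    have e4 : m ^ (υ*2) = m ^ (2*υ) := by rw [mul_comm]
    linear_combination (-8) * e3' + (4*m) * e1' + 4 * e2 + 4 * e4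
  -- integrability of exp of the sum
  have hint : ∀ (s : ℝ), Integrable (fun ω => Real.exp (s * (∑ i ∈ Finset.range M, Y i) ω)) P :=
    fun s => hYindep.integrable_exp_mul_sum hYmeas
      (fun i _ => aux_exp_int P (hYmeas i) (hbd i) s)
  -- upper tail
  have hup : (P {ω | m ^ ((1:ℝ)/2 + υ) ≤ (∑ i ∈ Finset.range M, Y i) ω}).toReal ≤
      Real.exp (-m ^ (2*υ) / (4 * c ^ 2)) := by
    calc (P {ω | m ^ ((1:ℝ)/2 + υ) ≤ (∑ i ∈ Finset.range M, Y i) ω}).toReal ≤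
        Real.exp (-t * m ^ ((1:ℝ)/2 + υ)) * mgf (∑ i ∈ Finset.range M, Y i) P t :=
          measure_ge_le_exp_mul_mgf _ ht0.le (hint t)
      _ ≤ Real.exp (-t * m ^ ((1:ℝ)/2 + υ)) * Real.exp (m * (t ^ 2 * c ^ 2)) := by
          exact mul_le_mul_of_nonneg_left (hmgf_sum t htc) (Real.exp_pos _).le
      _ = Real.exp (-m ^ (2*υ) / (4 * c ^ 2)) := by rw [← Real.exp_add, key]
  have hlo : (P {ω | (∑ i ∈ Finset.range M, Y i) ω ≤ -(m ^ ((1:ℝ)/2 + υ))}).toReal ≤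
      Real.exp (-m ^ (2*υ) / (4 * c ^ 2)) := by
    have htc' : |(-t)| * c ≤ 1 := by rwa [abs_neg]
    calc (P {ω | (∑ i ∈ Finset.range M, Y i) ω ≤ -(m ^ ((1:ℝ)/2 + υ))}).toReal ≤
        Real.exp (-(-t) * -(m ^ ((1:ℝ)/2 + υ))) * mgf (∑ i ∈ Finset.range M, Y i) P (-t) :=
          measure_le_le_exp_mul_mgf _ (by linarith) (hint (-t))
      _ ≤ Real.exp (-t * m ^ ((1:ℝ)/2 + υ)) * Real.exp (m * (t ^ 2 * c ^ 2)) := by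
          rw [show -(-t) * -(m ^ ((1:ℝ)/2 + υ)) = -t * m ^ ((1:ℝ)/2 + υ) by ring]
          refine mul_le_mul_of_nonneg_left ?_ (Real.exp_pos _).le
          have := hmgf_sum (-t) htc'
          rwa [neg_pow, neg_one_sq, one_mul] at this
      _ = Real.exp (-m ^ (2*υ) / (4 * c ^ 2)) := by rw [← Real.exp_add, key]
  -- combine
  have hsub : {ω | m ^ ((1:ℝ)/2 + υ) ≤ |∑ i ∈ Finset.range M, Y i ω|} ⊆
      {ω | m ^ ((1:ℝ)/2 + υ) ≤ (∑ i ∈ Finset.range M, Y i) ω} ∪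
      {ω | (∑ i ∈ Finset.range M, Y i) ω ≤ -(m ^ ((1:ℝ)/2 + υ))} := by
    intro ω hω
    simp only [Set.mem_setOf_eq, Set.mem_union, Finset.sum_apply] at *
    rcases le_abs.mp hω with h | h
    · exact Or.inl h
    · exact Or.inr (by linarith)
  calc P {ω | m ^ ((1:ℝ)/2 + υ) ≤ |∑ i ∈ Finset.range M, Y i ω|} ≤
      P {ω | m ^ ((1:ℝ)/2 + υ) ≤ (∑ i ∈ Finset.range M, Y i) ω} +
      P {ω | (∑ i ∈ Finset.range M, Y i) ω ≤ -(m ^ ((1:ℝ)/2 + υ))} :=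
        le_trans (measure_mono hsub) (measure_union_le _ _)
    _ ≤ ENNReal.ofReal (Real.exp (-m ^ (2*υ) / (4 * c ^ 2))) +
        ENNReal.ofReal (Real.exp (-m ^ (2*υ) / (4 * c ^ 2))) := by
        gcongr
        · rw [← ENNReal.ofReal_toReal (measure_ne_top P _)]
          exact ENNReal.ofReal_le_ofReal hup
        · rw [← ENNReal.ofReal_toReal (measure_ne_top P _)]
          exact ENNReal.ofReal_le_ofReal hlo
    _ = ENNReal.ofReal (2 * Real.exp (-m ^ (2*υ) / (4 * c ^ 2))) := by
        rw [← ENNReal.ofReal_add (Real.exp_pos _).le (Real.exp_pos _).le]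
        ring_nf

lemma aux_summable {c υ : ℝ} (hc : 1 ≤ c) (hυ0 : 0 < υ) :
    Summable (fun M : ℕ => 2 * Real.exp (-(M:ℝ) ^ (2*υ) / (4 * c ^ 2))) := by
  have hc0 : (0:ℝ) < c := lt_of_lt_of_le one_pos hc
  set k : ℕ := ⌈1/(2*υ)⌉₊ + 1 with hk
  have hp : 1 < 2*υ * k := by
    have h1 : 1/(2*υ) < (k:ℝ) := by
      rw [hk]; push_cast
      exact lt_of_le_of_lt (Nat.le_ceil _) (by linarith)
    calc (1:ℝ) = (2*υ) * (1/(2*υ)) := by field_simp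
      _ < 2*υ * k := mul_lt_mul_of_pos_left h1 (by linarith)
  set C : ℝ := 2 * (k.factorial : ℝ) * (4 * c ^ 2) ^ k with hC
  have hbound : ∀ M : ℕ, 1 ≤ M →
      2 * Real.exp (-(M:ℝ) ^ (2*υ) / (4 * c ^ 2)) ≤ C * ((M:ℝ) ^ (2*υ * k))⁻¹ := by
    intro M hM
    have hm : (1:ℝ) ≤ (M:ℝ) := by exact_mod_cast hM
    have hm0 : (0:ℝ) < (M:ℝ) := lt_of_lt_of_le one_pos hm
    rw [neg_div]
    set x : ℝ := (M:ℝ) ^ (2*υ) / (4 * c ^ 2) with hx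
    have hx0 : 0 < x := by
      rw [hx]
      exact div_pos (Real.rpow_pos_of_pos hm0 _) (by positivity)
    have h1 : x ^ k / (k.factorial : ℝ) ≤ Real.exp x := Real.pow_div_factorial_le_exp x hx0.le k
    have h2 : Real.exp (-x) ≤ (k.factorial : ℝ) / x ^ k := by
      rw [Real.exp_neg]
      calc (Real.exp x)⁻¹ ≤ (x ^ k / (k.factorial : ℝ))⁻¹ := by
            refine inv_anti₀ (by positivity) h1
        _ = (k.factorial : ℝ) / x ^ k := by rw [inv_div]
    have hxk : x ^ k = (M:ℝ) ^ (2*υ * k) / (4 * c ^ 2) ^ k := by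
      rw [hx, div_pow, ← Real.rpow_natCast ((M:ℝ) ^ (2*υ)) k, ← Real.rpow_mul hm0.le]
    have hMk : (0:ℝ) < (M:ℝ) ^ (2*υ * k) := Real.rpow_pos_of_pos hm0 _
    calc 2 * Real.exp (-x) ≤ 2 * ((k.factorial : ℝ) / x ^ k) := by linarith
      _ = C * ((M:ℝ) ^ (2*υ * k))⁻¹ := by
        rw [hxk, hC]
        field_simp
  refine (summable_nat_add_iff 1).mp ?_
  refine Summable.of_nonneg_of_le (fun n => by positivity)
    (fun n => hbound (n+1) (by omega)) ?_
  exact (summable_nat_add_iff 1).mpr ((Real.summable_nat_rpow_inv.mpr hp).mul_left C)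

/-- under A.1 (`sup_{θ∈S} |g − g^ε| ≤ ε`) and A.2
(`a⁻¹ ≤ g ≤ a` on `S`), for every bounded measurable `b` (with `|b| ≤ F` on
`S`) and every `0 < υ < 1/2` there is a nonnegative, almost surely finite
random variable `U_{υ,b}`, independent of `M`, such that almost surely, for
all `M ≥ 1`, `|(bg^ε, q^M) − (bg, q)| ≤ F ε + U_{υ,b} / M^(1/2 − υ)`, where
the samples `θ^(i)` are i.i.d. with common density `q` on `S`. -/
theorem approximate_weight_as_bound {K : ℕ} {Ω : Type*} [MeasurableSpace Ω]
    (P : Measure Ω) [IsProbabilityMeasure P]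
    (S : Set (Fin K → ℝ)) (hS : MeasurableSet S)
    (q : (Fin K → ℝ) → ℝ) (hq : Measurable q) (hqpos : ∀ θ ∈ S, 0 < q θ)
    (hq1 : (∫ θ in S, q θ) = 1)
    (g gε : (Fin K → ℝ) → ℝ) (hg : Measurable g) (hgε : Measurable gε)
    (ε : ℝ) (hε : 0 ≤ ε)
    (hA1 : ∀ θ ∈ S, |g θ - gε θ| ≤ ε)
    (a : ℝ) (ha : 0 < a) (hA2 : ∀ θ ∈ S, a⁻¹ ≤ g θ ∧ g θ ≤ a)
    (θs : ℕ → Ω → (Fin K → ℝ)) (hθmeas : ∀ i, Measurable (θs i))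
    (hindep : iIndepFun θs P)
    (hlaw : ∀ i, Measure.map (θs i) P =
      (volume.restrict S).withDensity (fun x => ENNReal.ofReal (q x)))
    (b : (Fin K → ℝ) → ℝ) (hb : Measurable b)
    (F : ℝ) (hF : 0 ≤ F) (hbF : ∀ θ ∈ S, |b θ| ≤ F)
    (υ : ℝ) (hυ0 : 0 < υ) (hυ : υ < 1 / 2) :
    ∃ U : Ω → ℝ, Measurable U ∧ (∀ ω, 0 ≤ U ω) ∧
      ∀ᵐ ω ∂P, ∀ M : ℕ, 1 ≤ M →
        |(M : ℝ)⁻¹ * ∑ i ∈ Finset.range M, b (θs i ω) * gε (θs i ω) -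
            ∫ x in S, b x * g x * q x| ≤
          F * ε + U ω / (M : ℝ) ^ ((1 : ℝ) / 2 - υ) := by
  classical
  set h : (Fin K → ℝ) → ℝ := fun θ => b θ * g θ with hhdef
  have hhmeas : Measurable h := hb.mul hg
  set μ0 : ℝ := ∫ x in S, b x * g x * q x with hμ0def
  -- q is integrable on S
  have hqint : IntegrableOn q S := by
    by_contra hcon
    rw [MeasureTheory.integral_undef hcon] at hq1; norm_num at hq1
  -- a.e. membership in S
  have hmemS : ∀ᵐ ω ∂P, ∀ i, θs i ω ∈ S := by
    rw [ae_all_iff]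
    intro i
    have h0 : P (θs i ⁻¹' Sᶜ) = 0 := by
      rw [← Measure.map_apply (hθmeas i) hS.compl, hlaw i,
        withDensity_apply _ hS.compl, Measure.restrict_restrict hS.compl]
      simp
    rw [ae_iff]
    convert h0 using 2
    rfl
  -- bound on h
  have hgabs : ∀ θ ∈ S, |g θ| ≤ a := by
    intro θ hθ
    have h1 := (hA2 θ hθ).1
    have h2 := (hA2 θ hθ).2
    have h3 : (0:ℝ) < a⁻¹ := inv_pos.mpr ha
    exact abs_le.mpr ⟨by linarith, h2⟩
  have habs_h : ∀ θ ∈ S, |h θ| ≤ F * a := by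
    intro θ hθ
    rw [hhdef, abs_mul]
    exact mul_le_mul (hbF θ hθ) (hgabs θ hθ) (abs_nonneg _) hF
  -- bound on μ0
  have hbgq_int : IntegrableOn (fun x => b x * g x * q x) S := by
    refine Integrable.mono' (hqint.const_mul (F * a))
      ((hb.mul hg).mul hq).aestronglyMeasurable ?_
    refine (ae_restrict_iff' hS).mpr (ae_of_all _ fun x hx => ?_)
    rw [Real.norm_eq_abs, abs_mul]
    have := habs_h x hx
    have hqx := (hqpos x hx).le
    calc |b x * g x| * |q x| ≤ (F * a) * |q x| :=
        mul_le_mul_of_nonneg_right this (abs_nonneg _)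
      _ = F * a * q x := by rw [abs_of_nonneg hqx]
  have hμ0bd : |μ0| ≤ F * a := by
    rw [hμ0def]
    have habs : |∫ x in S, b x * g x * q x| ≤ ∫ x in S, |b x * g x * q x| := by
      simpa only [Real.norm_eq_abs] using
        norm_integral_le_integral_norm (μ := volume.restrict S) (fun x => b x * g x * q x)
    have hstep : (∫ x in S, |b x * g x * q x|) ≤ ∫ x in S, F * a * q x := by
      refine integral_mono_ae hbgq_int.abs (hqint.const_mul _) ?_
      refine (ae_restrict_iff' hS).mpr (ae_of_all _ fun x hx => ?_)
      show |b x * g x * q x| ≤ F * a * q x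
      rw [abs_mul, abs_of_nonneg (hqpos x hx).le]
      exact mul_le_mul_of_nonneg_right (habs_h x hx) (hqpos x hx).le
    have hlast : (∫ x in S, F * a * q x) = F * a := by
      rw [integral_const_mul, hq1, mul_one]
    linarith
  -- the centered variables
  set c : ℝ := 2 * (F * a) + 1 with hcdef
  have hc1 : (1:ℝ) ≤ c := by nlinarith
  set Y : ℕ → Ω → ℝ := fun i ω => h (θs i ω) - μ0 with hYdef
  have hYmeas : ∀ i, Measurable (Y i) := fun i =>
    (hhmeas.comp (hθmeas i)).sub measurable_const
  have hYindep : iIndepFun Y P := by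
    have := hindep.comp (fun _ θ => h θ - μ0) (fun _ => hhmeas.sub measurable_const)
    exact this
  have hYbd : ∀ i, ∀ᵐ ω ∂P, |Y i ω| ≤ c := by
    intro i
    filter_upwards [hmemS] with ω hω
    have := habs_h _ (hω i)
    calc |Y i ω| ≤ |h (θs i ω)| + |μ0| := abs_sub _ _
      _ ≤ F * a + F * a := add_le_add this hμ0bd
      _ ≤ c := by rw [hcdef]; linarith
  -- mean computation
  have hmean0 : ∀ i, ∫ ω, h (θs i ω) ∂P = μ0 := by
    intro i
    rw [← integral_map (hθmeas i).aemeasurable hhmeas.aestronglyMeasurable, hlaw i]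
    have hqnn : Measurable (fun x => (q x).toNNReal) := hq.real_toNNReal
    rw [show (fun x => ENNReal.ofReal (q x)) = (fun x => ((q x).toNNReal : ℝ≥0∞)) from rfl,
      integral_withDensity_eq_integral_smul hqnn h]
    refine setIntegral_congr_fun hS (fun x hx => ?_)
    rw [NNReal.smul_def, Real.coe_toNNReal _ (hqpos x hx).le, hhdef, smul_eq_mul]
    ring
  have hYmean : ∀ i, ∫ ω, Y i ω ∂P = 0 := by
    intro i
    have hint : Integrable (fun ω => h (θs i ω)) P := by
      refine Integrable.mono' (integrable_const (F * a))
        (hhmeas.comp (hθmeas i)).aestronglyMeasurable ?_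
      filter_upwards [hmemS] with ω hω
      rw [Real.norm_eq_abs]
      exact habs_h _ (hω i)
    rw [hYdef]
    simp only
    rw [integral_sub hint (integrable_const _), hmean0 i, integral_const]
    simp
  -- the partial sums
  set T : ℕ → Ω → ℝ := fun M ω => ∑ i ∈ Finset.range M, Y i ω with hTdef
  have hTmeas : ∀ M, Measurable (T M) := fun M =>
    Finset.measurable_sum (Finset.range M) (fun i _ => hYmeas i)
  -- Borel–Cantelli
  have hBC : P {ω | ∃ᶠ M : ℕ in Filter.atTop, (M:ℝ) ^ ((1:ℝ)/2 + υ) ≤ |T M ω|} = 0 := by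
    refine measure_setOf_frequently_eq_zero ?_
    have hle : ∀ M : ℕ, P {ω | (M:ℝ) ^ ((1:ℝ)/2 + υ) ≤ |T M ω|} ≤
        ENNReal.ofReal (2 * Real.exp (-(M:ℝ) ^ (2*υ) / (4 * c ^ 2))) := by
      intro M
      rcases Nat.eq_zero_or_pos M with h0 | h1
      · subst h0
        calc P _ ≤ 1 := prob_le_one
          _ ≤ ENNReal.ofReal (2 * Real.exp (-(0:ℕ) ^ (2*υ) / (4 * c ^ 2))) := by
            rw [Nat.cast_zero, Real.zero_rpow (by positivity), neg_zero, zero_div,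
              Real.exp_zero, mul_one]
            exact ENNReal.one_le_ofReal.mpr one_le_two
      · exact aux_tail P hYmeas hYindep hc1 hYbd hYmean hυ0 hυ M h1
    refine ne_top_of_le_ne_top ?_ (ENNReal.tsum_le_tsum hle)
    rw [← ENNReal.ofReal_tsum_of_nonneg (fun M => by positivity) (aux_summable hc1 hυ0)]
    exact ENNReal.ofReal_ne_top
  have haeBC : ∀ᵐ ω ∂P,
      ¬ (∃ᶠ M : ℕ in Filter.atTop, (M:ℝ) ^ ((1:ℝ)/2 + υ) ≤ |T M ω|) := by
    rw [ae_iff]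
    simpa only [not_not] using hBC
  -- the random variable U
  set fU : ℕ → Ω → ℝ≥0∞ :=
    fun M ω => ENNReal.ofReal (|T M ω| / (M:ℝ) ^ ((1:ℝ)/2 + υ)) with hfUdef
  have hfUmeas : ∀ M, Measurable (fU M) := fun M =>
    ENNReal.measurable_ofReal.comp ((hTmeas M).abs.div_const _)
  set U : Ω → ℝ := fun ω => (⨆ M, fU M ω).toReal with hUdef
  refine ⟨U, ?_, fun ω => ENNReal.toReal_nonneg, ?_⟩
  · exact (Measurable.iSup hfUmeas).ennreal_toReal
  filter_upwards [hmemS, haeBC] with ω hmemω hfreqω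
  obtain ⟨N, hN'⟩ := Filter.eventually_atTop.mp (Filter.not_frequently.mp hfreqω)
  have hN : ∀ M, N ≤ M → |T M ω| < (M:ℝ) ^ ((1:ℝ)/2 + υ) := fun M hMN =>
    not_le.mp (hN' M hMN)
  -- finiteness of the supremum
  have hsup_lt : (⨆ M, fU M ω) < ⊤ := by
    set B : ℝ≥0∞ := ((Finset.range N).sup (fun M => fU M ω)) ⊔ 1 with hBdef
    have hB : ∀ M, fU M ω ≤ B := by
      intro M
      rcases lt_or_ge M N with hMN | hMN
      · exact le_sup_of_le_left (Finset.le_sup (f := fun M => fU M ω) (Finset.mem_range.mpr hMN))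
      · refine le_sup_of_le_right ?_
        rw [hfUdef, ENNReal.ofReal_le_one]
        rcases Nat.eq_zero_or_pos M with h0 | h1
        · subst h0
          simp [hTdef]
        · have hm0 : (0:ℝ) < (M:ℝ) := by exact_mod_cast h1
          have hpow : (0:ℝ) < (M:ℝ) ^ ((1:ℝ)/2 + υ) := Real.rpow_pos_of_pos hm0 _
          rw [div_le_one hpow]
          exact (hN M hMN).le
    refine lt_of_le_of_lt (iSup_le hB) ?_
    rw [hBdef, sup_lt_iff]
    constructor
    · refine (Finset.sup_lt_iff (by simp)).mpr (fun M _ => ?_)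
      exact ENNReal.ofReal_lt_top
    · exact ENNReal.one_lt_top
  have hU : ∀ M, |T M ω| / (M:ℝ) ^ ((1:ℝ)/2 + υ) ≤ U ω := by
    intro M
    have h1 : fU M ω ≤ ⨆ M, fU M ω := le_iSup (fun M => fU M ω) M
    have h2 := ENNReal.toReal_mono hsup_lt.ne h1
    rwa [hfUdef, ENNReal.toReal_ofReal (by positivity)] at h2
  intro M hM
  have hm : (1:ℝ) ≤ (M:ℝ) := by exact_mod_cast hM
  have hm0 : (0:ℝ) < (M:ℝ) := lt_of_lt_of_le one_pos hm
  have hMne : (M:ℝ) ≠ 0 := hm0.ne'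
  -- decomposition
  have key : (M:ℝ)⁻¹ * ∑ i ∈ Finset.range M, b (θs i ω) * gε (θs i ω) - μ0 =
      (M:ℝ)⁻¹ * (∑ i ∈ Finset.range M, (b (θs i ω) * gε (θs i ω) - h (θs i ω))) +
      (M:ℝ)⁻¹ * T M ω := by
    rw [hTdef]
    simp only [hYdef]
    rw [Finset.sum_sub_distrib, Finset.sum_sub_distrib, Finset.sum_const, Finset.card_range,
      nsmul_eq_mul]
    field_simp
    ring
  have hterm1 : |(M:ℝ)⁻¹ * (∑ i ∈ Finset.range M, (b (θs i ω) * gε (θs i ω) - h (θs i ω)))| ≤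
      F * ε := by
    rw [abs_mul, abs_inv, abs_of_pos hm0]
    have hsum : |∑ i ∈ Finset.range M, (b (θs i ω) * gε (θs i ω) - h (θs i ω))| ≤
        (M:ℝ) * (F * ε) := by
      calc |∑ i ∈ Finset.range M, (b (θs i ω) * gε (θs i ω) - h (θs i ω))| ≤
          ∑ i ∈ Finset.range M, |b (θs i ω) * gε (θs i ω) - h (θs i ω)| :=
            Finset.abs_sum_le_sum_abs _ _
        _ ≤ ∑ _i ∈ Finset.range M, F * ε := by
            refine Finset.sum_le_sum (fun i _ => ?_)
            have hθi := hmemω i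
            rw [hhdef]
            have : b (θs i ω) * gε (θs i ω) - b (θs i ω) * g (θs i ω) =
                b (θs i ω) * (gε (θs i ω) - g (θs i ω)) := by ring
            rw [this, abs_mul]
            refine mul_le_mul (hbF _ hθi) ?_ (abs_nonneg _) hF
            rw [abs_sub_comm]
            exact hA1 _ hθi
        _ = (M:ℝ) * (F * ε) := by rw [Finset.sum_const, Finset.card_range, nsmul_eq_mul]
    calc (M:ℝ)⁻¹ * |∑ i ∈ Finset.range M, (b (θs i ω) * gε (θs i ω) - h (θs i ω))| ≤
        (M:ℝ)⁻¹ * ((M:ℝ) * (F * ε)) := by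
          exact mul_le_mul_of_nonneg_left hsum (by positivity)
      _ = F * ε := by field_simp
  have hterm2 : |(M:ℝ)⁻¹ * T M ω| ≤ U ω / (M:ℝ) ^ ((1:ℝ)/2 - υ) := by
    rw [abs_mul, abs_inv, abs_of_pos hm0]
    have h1 : (M:ℝ)⁻¹ * |T M ω| =
        (|T M ω| / (M:ℝ) ^ ((1:ℝ)/2 + υ)) / (M:ℝ) ^ ((1:ℝ)/2 - υ) := by
      rw [div_div, ← Real.rpow_add hm0]
      norm_num
      rw [inv_mul_eq_div]
    rw [h1]
    gcongr
    exact hU M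
  calc |(M:ℝ)⁻¹ * ∑ i ∈ Finset.range M, b (θs i ω) * gε (θs i ω) - μ0| =
      |(M:ℝ)⁻¹ * (∑ i ∈ Finset.range M, (b (θs i ω) * gε (θs i ω) - h (θs i ω))) +
        (M:ℝ)⁻¹ * T M ω| := by rw [key]
    _ ≤ |(M:ℝ)⁻¹ * (∑ i ∈ Finset.range M, (b (θs i ω) * gε (θs i ω) - h (θs i ω)))| +
        |(M:ℝ)⁻¹ * T M ω| := abs_add_le _ _
    _ ≤ F * ε + U ω / (M:ℝ) ^ ((1:ℝ)/2 - υ) := add_le_add hterm1 hterm2
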